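/- Let (Ω, 𝓕, P) be a probability space and let (ε_k)_{k∈ℕ} be an independent family of square-integrable real random variables, each with mean 0 and variance 1. Let φ, ρ ∈ ℝ with |φ| < 1 and |ρ| < 1. Define the red-noise process v : ℕ → Ω → ℝ by v_0 = 0 and v_{t+1} = ρ·v_t + ε_t, and the state process x : ℕ → Ω → ℝ by x_0 = 0 and x_{t+1} = φ·x_t + v_t. Then the lag-1 autocorrelation Cov(x_{t+1}, x_t)/Var(x_t) converges to (φ + ρ)/(1 + φρ) as t → ∞. -/

import Mathlib

open MeasureTheory ProbabilityTheory Filter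

/-- The covariance `Cov(X, Y) = E[(X - E X)(Y - E Y)]` of two real random variables. -/
noncomputable def cov {Ω : Type*} [MeasureSpace Ω] (X Y : Ω → ℝ) : ℝ :=
  ∫ ω, (X ω - ∫ ω', X ω' ∂(ℙ : Measure Ω)) * (Y ω - ∫ ω', Y ω' ∂(ℙ : Measure Ω)) ∂(ℙ : Measure Ω)

/-- Convergence of solutions of the linear recursion `u (t+1) = q * u t + w t` with `|q| < 1`. -/
lemma RN.tendsto_linear_rec (q : ℝ) (hq : |q| < 1) (w : ℕ → ℝ) (L : ℝ)
    (hw : Tendsto w atTop (nhds L)) (u : ℕ → ℝ)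
    (hu : ∀ t, u (t + 1) = q * u t + w t) :
    Tendsto u atTop (nhds (L / (1 - q))) := by
  have hq1 : (1 : ℝ) - q ≠ 0 := by
    intro h
    have : q = 1 := by linarith
    rw [this] at hq; norm_num at hq
  set l := L / (1 - q) with hl
  have hfix : l = q * l + L := by
    have h := div_mul_cancel₀ L hq1; rw [← hl] at h; linarith
  have hqnn : 0 ≤ |q| := abs_nonneg q
  -- show u t - l → 0
  have key : Tendsto (fun t => u t - l) atTop (nhds 0) := by
    rw [Metric.tendsto_atTop]
    intro δ hδ
    have hr : Tendsto (fun t => |w t - L|) atTop (nhds 0) := by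
      have := (hw.sub (tendsto_const_nhds : Tendsto (fun _ : ℕ => L) atTop (nhds L))).abs
      simpa using this
    have h2 : (0:ℝ) < δ * (1 - |q|) / 2 := by nlinarith
    obtain ⟨N, hN⟩ := (Metric.tendsto_atTop.mp hr) (δ * (1 - |q|) / 2) h2
    have hN' : ∀ t ≥ N, |w t - L| ≤ δ * (1 - |q|) / 2 := by
      intro t ht
      have := hN t ht
      simp only [Real.dist_eq, sub_zero, abs_abs] at this
      linarith
    have hstep : ∀ m : ℕ, |u (N + m) - l| ≤ |q| ^ m * |u N - l| + δ / 2 * (1 - |q| ^ m) := by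
      intro m
      induction m with
      | zero => simp
      | succ m ih =>
        have heq : u (N + (m + 1)) - l = q * (u (N + m) - l) + (w (N + m) - L) := by
          have := hu (N + m)
          rw [show N + (m + 1) = (N + m) + 1 by ring, this]
          linarith [hfix]
        have hb : |u (N + (m+1)) - l| ≤ |q| * |u (N + m) - l| + |w (N + m) - L| := by
          rw [heq]
          calc |q * (u (N + m) - l) + (w (N + m) - L)|
              ≤ |q * (u (N + m) - l)| + |w (N + m) - L| := abs_add_le _ _
            _ = |q| * |u (N + m) - l| + |w (N + m) - L| := by rw [abs_mul]
        have hw' := hN' (N + m) (Nat.le_add_right _ _)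
        have hqm : (0:ℝ) ≤ |q| ^ m := by positivity
        have hq1' : |q| ^ m ≤ 1 := pow_le_one₀ hqnn hq.le
        calc |u (N + (m+1)) - l| ≤ |q| * |u (N + m) - l| + |w (N + m) - L| := hb
          _ ≤ |q| * (|q| ^ m * |u N - l| + δ / 2 * (1 - |q| ^ m)) + δ * (1 - |q|) / 2 := by
              have := mul_le_mul_of_nonneg_left ih hqnn
              linarith
          _ ≤ |q| ^ (m+1) * |u N - l| + δ / 2 * (1 - |q| ^ (m+1)) := by
              rw [pow_succ]
              nlinarith [abs_nonneg (u N - l)]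
    have hpow : Tendsto (fun m : ℕ => |q| ^ m * |u N - l|) atTop (nhds 0) := by
      have := tendsto_pow_atTop_nhds_zero_of_lt_one hqnn hq
      simpa using this.mul_const |u N - l|
    obtain ⟨M, hM⟩ := (Metric.tendsto_atTop.mp hpow) (δ / 2) (by positivity)
    refine ⟨N + M, fun t ht => ?_⟩
    obtain ⟨m, rfl⟩ : ∃ m, t = N + m := ⟨t - N, by omega⟩
    have hmM : m ≥ M := by omega
    have h1 := hstep m
    have h2 := hM m hmM
    simp only [Real.dist_eq, sub_zero] at h2 ⊢
    have h4 : |q| ^ m * |u N - l| < δ / 2 := by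
      have h3 : |(|q| ^ m * |u N - l|)| = |q| ^ m * |u N - l| :=
        abs_of_nonneg (by positivity)
      rw [h3] at h2; exact h2
    have hqm : (0:ℝ) ≤ |q| ^ m := by positivity
    have hq1' : |q| ^ m ≤ 1 := pow_le_one₀ hqnn hq.le
    have : |u (N + m) - l| < δ := by nlinarith
    exact this
  have := key.add (tendsto_const_nhds : Tendsto (fun _ : ℕ => l) atTop (nhds l))
  simpa using this

/-- Coefficients of the red-noise process in terms of the innovations. -/
noncomputable def RN.b (ρ : ℝ) : ℕ → ℕ → ℝ
  | 0, _ => 0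
  | (t+1), k => ρ * RN.b ρ t k + (if k = t then 1 else 0)

/-- Coefficients of the state process in terms of the innovations. -/
noncomputable def RN.a (φ ρ : ℝ) : ℕ → ℕ → ℝ
  | 0, _ => 0
  | (t+1), k => φ * RN.a φ ρ t k + RN.b ρ t k

lemma RN.b_eq_zero (ρ : ℝ) : ∀ t k, t ≤ k → RN.b ρ t k = 0 := by
  intro t
  induction t with
  | zero => intro k _; rfl
  | succ t ih =>
    intro k hk
    have h1 : RN.b ρ t k = 0 := ih k (by omega)
    have h2 : k ≠ t := by omega
    simp [RN.b, h1, h2]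

lemma RN.a_eq_zero (φ ρ : ℝ) : ∀ t k, t ≤ k → RN.a φ ρ t k = 0 := by
  intro t
  induction t with
  | zero => intro k _; rfl
  | succ t ih =>
    intro k hk
    have h1 : RN.a φ ρ t k = 0 := ih k (by omega)
    have h2 : RN.b ρ t k = 0 := RN.b_eq_zero ρ t k (by omega)
    simp [RN.a, h1, h2]

/-- Variance-type sum for the red noise. -/
noncomputable def RN.SB (ρ : ℝ) (t : ℕ) : ℝ := ∑ k ∈ Finset.range t, RN.b ρ t k * RN.b ρ t k

/-- Covariance-type sum between state and red noise. -/
noncomputable def RN.SAB (φ ρ : ℝ) (t : ℕ) : ℝ :=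
  ∑ k ∈ Finset.range t, RN.a φ ρ t k * RN.b ρ t k

/-- Variance-type sum for the state. -/
noncomputable def RN.SA (φ ρ : ℝ) (t : ℕ) : ℝ :=
  ∑ k ∈ Finset.range t, RN.a φ ρ t k * RN.a φ ρ t k

lemma RN.SB_rec (ρ : ℝ) (t : ℕ) : RN.SB ρ (t + 1) = ρ ^ 2 * RN.SB ρ t + 1 := by
  unfold RN.SB
  rw [Finset.sum_range_succ]
  have hbt : RN.b ρ t t = 0 := RN.b_eq_zero ρ t t le_rfl
  have hlast : RN.b ρ (t+1) t * RN.b ρ (t+1) t = 1 := by simp [RN.b, hbt]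
  rw [hlast]
  congr 1
  rw [Finset.mul_sum]
  apply Finset.sum_congr rfl
  intro k hk
  have hkt : k ≠ t := by simp at hk; omega
  simp [RN.b, hkt]; ring

lemma RN.SAB_rec (φ ρ : ℝ) (t : ℕ) :
    RN.SAB φ ρ (t + 1) = φ * ρ * RN.SAB φ ρ t + ρ * RN.SB ρ t := by
  unfold RN.SAB RN.SB
  rw [Finset.sum_range_succ]
  have hat : RN.a φ ρ t t = 0 := RN.a_eq_zero φ ρ t t le_rfl
  have hbt : RN.b ρ t t = 0 := RN.b_eq_zero ρ t t le_rfl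
  have hlast : RN.a φ ρ (t+1) t * RN.b ρ (t+1) t = 0 := by simp [RN.a, RN.b, hat, hbt]
  rw [hlast, add_zero, Finset.mul_sum, Finset.mul_sum, ← Finset.sum_add_distrib]
  apply Finset.sum_congr rfl
  intro k hk
  have hkt : k ≠ t := by simp at hk; omega
  simp [RN.a, RN.b, hkt]; ring

lemma RN.SA_rec (φ ρ : ℝ) (t : ℕ) :
    RN.SA φ ρ (t + 1) = φ ^ 2 * RN.SA φ ρ t + (2 * φ * RN.SAB φ ρ t + RN.SB ρ t) := by
  unfold RN.SA RN.SAB RN.SB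
  rw [Finset.sum_range_succ]
  have hat : RN.a φ ρ t t = 0 := RN.a_eq_zero φ ρ t t le_rfl
  have hbt : RN.b ρ t t = 0 := RN.b_eq_zero ρ t t le_rfl
  have hlast : RN.a φ ρ (t+1) t * RN.a φ ρ (t+1) t = 0 := by simp [RN.a, hat, hbt]
  rw [hlast, add_zero, Finset.mul_sum, Finset.mul_sum, ← Finset.sum_add_distrib,
    ← Finset.sum_add_distrib]
  apply Finset.sum_congr rfl
  intro k _
  simp only [RN.a]
  ring

lemma RN.cross (φ ρ : ℝ) (t : ℕ) :
    ∑ k ∈ Finset.range (t + 1), RN.a φ ρ (t + 1) k * RN.a φ ρ t k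
      = φ * RN.SA φ ρ t + RN.SAB φ ρ t := by
  unfold RN.SA RN.SAB
  rw [Finset.sum_range_succ]
  have hat : RN.a φ ρ t t = 0 := RN.a_eq_zero φ ρ t t le_rfl
  rw [hat, mul_zero, add_zero, Finset.mul_sum, ← Finset.sum_add_distrib]
  apply Finset.sum_congr rfl
  intro k _
  simp only [RN.a]
  ring

section aux
variable {Ω : Type*} [MeasureSpace Ω] [IsProbabilityMeasure (ℙ : Measure Ω)]
  (ε : ℕ → Ω → ℝ)
  (hindep : iIndepFun ε ℙ)
  (hL2 : ∀ k, MemLp (ε k) 2 ℙ)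
  (hmean : ∀ k, ∫ ω, ε k ω ∂ℙ = 0)
  (hvar : ∀ k, variance (ε k) ℙ = 1)

include hindep hL2 hmean hvar

omit hindep hmean hvar [IsProbabilityMeasure (ℙ : Measure Ω)] in
lemma RN.int_mul (i j : ℕ) : Integrable (fun ω => ε i ω * ε j ω) ℙ := by
  apply Integrable.mono' (((hL2 i).integrable_sq).add ((hL2 j).integrable_sq))
  · exact ((hL2 i).aestronglyMeasurable.mul (hL2 j).aestronglyMeasurable)
  · filter_upwards with ω
    have : |ε i ω * ε j ω| ≤ ε i ω ^ 2 + ε j ω ^ 2 := by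
      rw [abs_mul]
      nlinarith [abs_nonneg (ε i ω), abs_nonneg (ε j ω), sq_abs (ε i ω), sq_abs (ε j ω),
        sq_nonneg (|ε i ω| - |ε j ω|)]
    simpa [abs_mul] using this

lemma RN.orth (i j : ℕ) : ∫ ω, ε i ω * ε j ω ∂ℙ = if i = j then 1 else 0 := by
  by_cases h : i = j
  · subst h
    simp only [if_pos rfl]
    have hv := variance_eq_sub (hL2 i)
    rw [hvar i] at hv
    have hm : (ℙ : Measure Ω)[ε i] = 0 := hmean i
    rw [hm] at hv
    have : (ℙ : Measure Ω)[(ε i) ^ 2] = 1 := by linarith [hv]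
    calc ∫ ω, ε i ω * ε i ω ∂ℙ = ∫ ω, (ε i ω) ^ 2 ∂ℙ := by
          congr 1; funext ω; ring
      _ = 1 := this
  · simp only [if_neg h]
    have hi : IndepFun (ε i) (ε j) ℙ := (hindep.indepFun h)
    have := hi.integral_mul_eq_mul_integral (hL2 i).aestronglyMeasurable (hL2 j).aestronglyMeasurable
    calc ∫ ω, ε i ω * ε j ω ∂ℙ = ∫ ω, (ε i * ε j) ω ∂ℙ := rfl
      _ = 0 := by rw [this, hmean i, hmean j]; ring

lemma RN.cov_sum (n : ℕ) (a b : ℕ → ℝ) :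
    cov (fun ω => ∑ k ∈ Finset.range n, a k * ε k ω)
        (fun ω => ∑ k ∈ Finset.range n, b k * ε k ω)
      = ∑ k ∈ Finset.range n, a k * b k := by
  have hmean' : ∀ (c : ℕ → ℝ), ∫ ω, (∑ k ∈ Finset.range n, c k * ε k ω) ∂ℙ = 0 := by
    intro c
    rw [integral_finset_sum _ (fun k _ => ((hL2 k).integrable one_le_two).const_mul (c k))]
    simp only [integral_const_mul, hmean, mul_zero, Finset.sum_const_zero]
  unfold cov
  rw [hmean' a, hmean' b]
  simp only [sub_zero]
  have hexp : ∀ ω, (∑ k ∈ Finset.range n, a k * ε k ω) * (∑ k ∈ Finset.range n, b k * ε k ω)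
      = ∑ k ∈ Finset.range n, ∑ j ∈ Finset.range n, (a k * b j) * (ε k ω * ε j ω) := by
    intro ω
    rw [Finset.sum_mul_sum]
    apply Finset.sum_congr rfl; intro k _
    apply Finset.sum_congr rfl; intro j _
    ring
  simp only [hexp]
  have hintp : ∀ k j, Integrable (fun ω => ε k ω * ε j ω) ℙ := fun k j =>
    RN.int_mul ε hL2 k j
  rw [integral_finset_sum]
  · have : ∀ k ∈ Finset.range n,
        ∫ ω, (∑ j ∈ Finset.range n, (a k * b j) * (ε k ω * ε j ω)) ∂ℙ
          = a k * b k := by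
      intro k hk
      rw [integral_finset_sum _ (fun j _ => ((hintp k j).const_mul _))]
      have : ∀ j ∈ Finset.range n, ∫ ω, (a k * b j) * (ε k ω * ε j ω) ∂ℙ
          = if k = j then a k * b j else 0 := by
        intro j _
        rw [integral_const_mul, RN.orth ε hindep hL2 hmean hvar k j]
        by_cases h : k = j <;> simp [h]
      rw [Finset.sum_congr rfl this, Finset.sum_ite_eq]
      simp [hk]
    rw [Finset.sum_congr rfl this]
  · intro k _
    apply integrable_finset_sum
    intro j _
    exact (hintp k j).const_mul _

end aux

/-- For the state process `x_{t+1} = φ x_t + v_t`, `x_0 = 0`, driven by red noise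
`v_{t+1} = ρ v_t + ε_t`, `v_0 = 0`, where the `ε_t` are independent with mean 0 and
variance 1, and `|φ| < 1`, `|ρ| < 1`, the lag-1 autocorrelation
`Cov(x_{t+1}, x_t)/Var(x_t)` converges to `φ_b = (φ + ρ)/(1 + φρ)` as `t → ∞`. -/
theorem red_noise_lag1_autocorrelation {Ω : Type*} [MeasureSpace Ω]
    [IsProbabilityMeasure (ℙ : Measure Ω)]
    (ε : ℕ → Ω → ℝ)
    (hindep : iIndepFun ε ℙ)
    (hL2 : ∀ k, MemLp (ε k) 2 ℙ)
    (hmean : ∀ k, ∫ ω, ε k ω ∂ℙ = 0)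
    (hvar : ∀ k, variance (ε k) ℙ = 1)
    (φ ρ : ℝ) (hφ : |φ| < 1) (hρ : |ρ| < 1)
    (v : ℕ → Ω → ℝ) (hv0 : v 0 = fun _ => 0)
    (hvrec : ∀ t, v (t + 1) = fun ω => ρ * v t ω + ε t ω)
    (x : ℕ → Ω → ℝ) (hx0 : x 0 = fun _ => 0)
    (hxrec : ∀ t, x (t + 1) = fun ω => φ * x t ω + v t ω) :
    Tendsto (fun t : ℕ => cov (x (t + 1)) (x t) / cov (x t) (x t))
      atTop (nhds ((φ + ρ) / (1 + φ * ρ))) := by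
  -- representations of v and x as linear combinations of the innovations
  have hvrep : ∀ t, v t = fun ω => ∑ k ∈ Finset.range t, RN.b ρ t k * ε k ω := by
    intro t
    induction t with
    | zero => rw [hv0]; simp
    | succ t ih =>
      rw [hvrec t, ih]
      funext ω
      rw [Finset.sum_range_succ]
      have hbt : RN.b ρ t t = 0 := RN.b_eq_zero ρ t t le_rfl
      have hlast : RN.b ρ (t+1) t = 1 := by simp [RN.b, hbt]
      rw [hlast, one_mul, Finset.mul_sum]
      congr 1
      apply Finset.sum_congr rfl
      intro k hk
      have hkt : k ≠ t := by simp at hk; omega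
      simp [RN.b, hkt]; ring
  have hxrep : ∀ t, x t = fun ω => ∑ k ∈ Finset.range t, RN.a φ ρ t k * ε k ω := by
    intro t
    induction t with
    | zero => rw [hx0]; simp
    | succ t ih =>
      rw [hxrec t, ih, hvrep t]
      funext ω
      rw [Finset.sum_range_succ]
      have hat : RN.a φ ρ t t = 0 := RN.a_eq_zero φ ρ t t le_rfl
      have hbt : RN.b ρ t t = 0 := RN.b_eq_zero ρ t t le_rfl
      have hlast : RN.a φ ρ (t+1) t = 0 := by simp [RN.a, hat, hbt]
      rw [hlast, zero_mul, add_zero, Finset.mul_sum, ← Finset.sum_add_distrib]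
      apply Finset.sum_congr rfl
      intro k _
      simp only [RN.a]
      ring
  -- variance and covariance in terms of the coefficient sums
  have hvarx : ∀ t, cov (x t) (x t) = RN.SA φ ρ t := by
    intro t
    rw [hxrep t]
    exact RN.cov_sum ε hindep hL2 hmean hvar t _ _
  have hcovx : ∀ t, cov (x (t + 1)) (x t) = φ * RN.SA φ ρ t + RN.SAB φ ρ t := by
    intro t
    have hxt : x t = fun ω => ∑ k ∈ Finset.range (t + 1), RN.a φ ρ t k * ε k ω := by
      rw [hxrep t]
      funext ω
      rw [Finset.sum_range_succ, RN.a_eq_zero φ ρ t t le_rfl, zero_mul, add_zero]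
    rw [hxrep (t + 1), hxt,
      RN.cov_sum ε hindep hL2 hmean hvar (t + 1) (RN.a φ ρ (t+1)) (RN.a φ ρ t),
      RN.cross φ ρ t]
  -- basic positivity facts
  have hρ2 : ρ ^ 2 < 1 := by nlinarith [sq_abs ρ, abs_nonneg ρ]
  have hφ2 : φ ^ 2 < 1 := by nlinarith [sq_abs φ, abs_nonneg φ]
  have hφρ : |φ * ρ| < 1 := by
    rw [abs_mul]
    nlinarith [abs_nonneg φ, abs_nonneg ρ]
  have hφρ' := abs_lt.mp hφρ
  have c1 : (0:ℝ) < 1 - ρ ^ 2 := by linarith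
  have c2 : (0:ℝ) < 1 - φ ^ 2 := by linarith
  have c3 : (0:ℝ) < 1 - φ * ρ := by linarith [hφρ'.2]
  have c4 : (0:ℝ) < 1 + φ * ρ := by linarith [hφρ'.1]
  -- limits of the coefficient sums
  set CB : ℝ := 1 / (1 - ρ ^ 2) with hCB
  have hSB : Tendsto (RN.SB ρ) atTop (nhds CB) := by
    have := RN.tendsto_linear_rec (ρ ^ 2) (by rwa [abs_of_nonneg (sq_nonneg ρ)])
      (fun _ => 1) 1 tendsto_const_nhds (RN.SB ρ) (fun t => RN.SB_rec ρ t)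
    simpa [hCB] using this
  set LB : ℝ := (ρ * CB) / (1 - φ * ρ) with hLB
  have hSAB : Tendsto (RN.SAB φ ρ) atTop (nhds LB) := by
    have hw : Tendsto (fun t => ρ * RN.SB ρ t) atTop (nhds (ρ * CB)) := hSB.const_mul ρ
    exact RN.tendsto_linear_rec (φ * ρ) hφρ _ _ hw (RN.SAB φ ρ) (fun t => RN.SAB_rec φ ρ t)
  set LA : ℝ := (2 * φ * LB + CB) / (1 - φ ^ 2) with hLA
  have hSA : Tendsto (RN.SA φ ρ) atTop (nhds LA) := by
    have hw : Tendsto (fun t => 2 * φ * RN.SAB φ ρ t + RN.SB ρ t) atTop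
        (nhds (2 * φ * LB + CB)) := (hSAB.const_mul (2 * φ)).add hSB
    exact RN.tendsto_linear_rec (φ ^ 2) (by rwa [abs_of_nonneg (sq_nonneg φ)])
      _ _ hw (RN.SA φ ρ) (fun t => RN.SA_rec φ ρ t)
  -- LA is positive
  have hCBpos : 0 < CB := by rw [hCB]; positivity
  have hnum : 2 * φ * LB + CB = (1 + φ * ρ) / ((1 - ρ ^ 2) * (1 - φ * ρ)) := by
    rw [hLB, hCB]
    field_simp
    ring
  have hLApos : 0 < LA := by
    rw [hLA, hnum]
    positivity
  have hLAne : LA ≠ 0 := ne_of_gt hLApos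
  -- final limit
  have htend : Tendsto (fun t => (φ * RN.SA φ ρ t + RN.SAB φ ρ t) / RN.SA φ ρ t) atTop
      (nhds ((φ * LA + LB) / LA)) :=
    Tendsto.div ((hSA.const_mul φ).add hSAB) hSA hLAne
  have hfinal : (φ * LA + LB) / LA = (φ + ρ) / (1 + φ * ρ) := by
    rw [hLA, hnum, hLB, hCB]
    field_simp
    ring
  have hfun : (fun t : ℕ => cov (x (t + 1)) (x t) / cov (x t) (x t))
      = fun t => (φ * RN.SA φ ρ t + RN.SAB φ ρ t) / RN.SA φ ρ t := by
    funext t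
    rw [hcovx t, hvarx t]
  rw [hfun, ← hfinal]
  exact htend
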